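/- Binomial transform of a J-fraction: if ∑ a_n t^n is given by the J-fraction 1/(1 - γ_0 t - β_1 t²/(1 - γ_1 t - β_2 t²/(1 - ...))) as formal power series, then the ξ-binomial transform b_n = ∑_{k=0}^n C(n,k) a_k ξ^{n-k} satisfies ∑ b_n t^n = 1/(1 - (γ_0+ξ) t - β_1 t²/(1 - (γ_1+ξ) t - β_2 t²/(1 - ...))). -/

import Mathlib

open PowerSeries Finset

/-- Depth-`d` truncation of the J-fraction starting at level `i`. -/
noncomputable def jfrac (γ β : ℕ → ℝ) : ℕ → ℕ → PowerSeries ℝ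
  | 0, _ => 1
  | d + 1, i => (1 - PowerSeries.C (γ i) * PowerSeries.X
      - PowerSeries.C (β (i + 1)) * PowerSeries.X ^ 2 * jfrac γ β d (i + 1))⁻¹

namespace StmtAux

/-- `(1 - ξ X)⁻¹` given explicitly. -/
noncomputable def Qi (ξ : ℝ) : PowerSeries ℝ := PowerSeries.mk fun n => ξ ^ n

/-- the series `X / (1 - ξ X)`. -/
noncomputable def u (ξ : ℝ) : PowerSeries ℝ := PowerSeries.X * Qi ξ

lemma Q_mul_Qi (ξ : ℝ) : (1 - PowerSeries.C ξ * PowerSeries.X) * Qi ξ = 1 := by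
  ext n
  rw [sub_mul, one_mul, map_sub, mul_assoc]
  cases n with
  | zero => simp [Qi]
  | succ n =>
    rw [coeff_C_mul, coeff_succ_X_mul]
    simp [Qi, pow_succ, mul_comm]

lemma Qi_mul_Q (ξ : ℝ) : Qi ξ * (1 - PowerSeries.C ξ * PowerSeries.X) = 1 := by
  rw [mul_comm]; exact Q_mul_Qi ξ

lemma X_dvd_u (ξ : ℝ) : (PowerSeries.X : PowerSeries ℝ) ∣ u ξ := ⟨Qi ξ, rfl⟩

lemma coeff_Qi_pow (ξ : ℝ) (k : ℕ) : ∀ m : ℕ,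
    PowerSeries.coeff m (Qi ξ ^ (k + 1)) = ((m + k).choose k : ℝ) * ξ ^ m := by
  induction k with
  | zero => intro m; simp [Qi]
  | succ k ih =>
    intro m
    rw [pow_succ, mul_comm, PowerSeries.coeff_mul]
    rw [Finset.Nat.sum_antidiagonal_eq_sum_range_succ_mk]
    have h1 : ∀ i ∈ range (m + 1),
        PowerSeries.coeff i (Qi ξ) * PowerSeries.coeff (m - i) (Qi ξ ^ (k + 1))
          = (((m - i) + k).choose k : ℝ) * ξ ^ m := by
      intro i hi
      rw [mem_range] at hi
      rw [ih]
      simp only [Qi, PowerSeries.coeff_mk]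
      rw [mul_left_comm, ← pow_add]
      have : i + (m - i) = m := by omega
      rw [this]
    rw [Finset.sum_congr rfl h1, ← Finset.sum_mul]
    congr 1
    rw [← Nat.cast_sum]
    congr 1
    have h2 : ∑ i ∈ range (m + 1), ((m - i) + k).choose k
        = ∑ j ∈ range (m + 1), (j + k).choose k := by
      rw [← Finset.sum_range_reflect]
      apply Finset.sum_congr rfl
      intro j hj
      rw [mem_range] at hj
      congr 2
      omega
    rw [h2]
    clear h1 h2 ih
    induction m with
    | zero => simp
    | succ m ihm =>
      rw [Finset.sum_range_succ, ihm]
      have e1 : m + 1 + k = m + k + 1 := by omega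
      have e2 : m + 1 + (k + 1) = (m + k + 1) + 1 := by omega
      rw [e1, e2, Nat.choose_succ_succ (m + k + 1) k, add_comm]
      have e3 : m + (k + 1) = m + k + 1 := by omega
      rw [e3, Nat.succ_eq_add_one]

lemma coeff_Qi_mul_u_pow (ξ : ℝ) (k n : ℕ) :
    PowerSeries.coeff n (Qi ξ * u ξ ^ k) = (n.choose k : ℝ) * ξ ^ (n - k) := by
  have hu : Qi ξ * u ξ ^ k = PowerSeries.X ^ k * Qi ξ ^ (k + 1) := by
    rw [u, mul_pow, pow_succ]; ring
  rw [hu]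
  rcases le_or_gt k n with h | h
  · have hn : n = (n - k) + k := by omega
    rw [hn, PowerSeries.coeff_X_pow_mul, coeff_Qi_pow]
    have : n - k + k = n := by omega
    rw [this]
  · have hd : (PowerSeries.X : PowerSeries ℝ) ^ k ∣ PowerSeries.X ^ k * Qi ξ ^ (k + 1) :=
      dvd_mul_right _ _
    rw [PowerSeries.X_pow_dvd_iff.mp hd n h, Nat.choose_eq_zero_of_lt h]
    simp

/-- Truncated substitution `F ↦ F(X/(1-ξX))` using the first `M` coefficients. -/
noncomputable def S (ξ : ℝ) (M : ℕ) (F : PowerSeries ℝ) : PowerSeries ℝ :=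
  ∑ k ∈ range M, PowerSeries.C (PowerSeries.coeff k F) * u ξ ^ k

lemma S_eq_aeval (ξ : ℝ) (M : ℕ) (F : PowerSeries ℝ) :
    S ξ M F = Polynomial.aeval (u ξ) (PowerSeries.trunc M F) := by
  cases M with
  | zero => simp [S]
  | succ m =>
    rw [Polynomial.aeval_eq_sum_range' (PowerSeries.natDegree_trunc_lt F m)]
    apply Finset.sum_congr rfl
    intro k hk
    rw [mem_range] at hk
    rw [PowerSeries.coeff_trunc, if_pos hk, PowerSeries.smul_eq_C_mul]

lemma S_mul (ξ : ℝ) (M : ℕ) (F G : PowerSeries ℝ) :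
    (PowerSeries.X : PowerSeries ℝ) ^ M ∣ S ξ M (F * G) - S ξ M F * S ξ M G := by
  rw [S_eq_aeval, S_eq_aeval, S_eq_aeval, ← map_mul, ← map_sub]
  set p : Polynomial ℝ := PowerSeries.trunc M F * PowerSeries.trunc M G with hp
  set q : Polynomial ℝ := PowerSeries.trunc M (F * G) with hq
  have h : (Polynomial.X : Polynomial ℝ) ^ M ∣ q - p := by
    rw [Polynomial.X_pow_dvd_iff]
    intro d hd
    rw [Polynomial.coeff_sub, hq, hp]
    have h1 : (PowerSeries.trunc M F * PowerSeries.trunc M G).coeff d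
        = (PowerSeries.trunc M ((PowerSeries.trunc M F : PowerSeries ℝ)
            * (PowerSeries.trunc M G : PowerSeries ℝ))).coeff d := by
      rw [PowerSeries.coeff_trunc, if_pos hd]
      rw [← Polynomial.coeff_coe, Polynomial.coe_mul]
    rw [h1, PowerSeries.trunc_trunc_mul_trunc, sub_self]
  obtain ⟨r, hr⟩ := h
  rw [hr, map_mul, map_pow, Polynomial.aeval_X]
  exact Dvd.dvd.mul_right (pow_dvd_pow_of_dvd (X_dvd_u ξ) M) _

lemma S_X_pow (ξ : ℝ) {j M : ℕ} (h : j < M) :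
    S ξ M (PowerSeries.X ^ j) = u ξ ^ j := by
  rw [S, Finset.sum_eq_single j]
  · rw [PowerSeries.coeff_X_pow, if_pos rfl, map_one, one_mul]
  · intro k _ hkj
    rw [PowerSeries.coeff_X_pow, if_neg hkj, map_zero, zero_mul]
  · intro h'; exact absurd (mem_range.mpr h) h'

lemma S_one (ξ : ℝ) {M : ℕ} (h : 0 < M) : S ξ M 1 = 1 := by
  have := S_X_pow ξ (j := 0) (M := M) h
  simpa using this

lemma S_sub (ξ : ℝ) (M : ℕ) (F G : PowerSeries ℝ) :
    S ξ M (F - G) = S ξ M F - S ξ M G := by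
  simp [S, ← Finset.sum_sub_distrib, sub_mul]

lemma S_C_mul (ξ : ℝ) (M : ℕ) (c : ℝ) (F : PowerSeries ℝ) :
    S ξ M (PowerSeries.C c * F) = PowerSeries.C c * S ξ M F := by
  simp [S, Finset.mul_sum, mul_assoc]

lemma coeff_Qi_mul_S (ξ : ℝ) {M n : ℕ} (F : PowerSeries ℝ) (h : n < M) :
    PowerSeries.coeff n (Qi ξ * S ξ M F)
      = ∑ k ∈ range (n + 1), (n.choose k : ℝ) * PowerSeries.coeff k F * ξ ^ (n - k) := by
  rw [S, Finset.mul_sum, map_sum]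
  have h1 : ∀ k, PowerSeries.coeff n (Qi ξ * (PowerSeries.C (PowerSeries.coeff k F) * u ξ ^ k))
      = (n.choose k : ℝ) * PowerSeries.coeff k F * ξ ^ (n - k) := by
    intro k
    rw [mul_left_comm, coeff_C_mul, coeff_Qi_mul_u_pow]
    ring
  simp only [h1]
  symm
  apply Finset.sum_subset
  · exact Finset.range_subset_range.mpr (by omega)
  · intro k _ hk
    rw [mem_range, not_lt] at hk
    rw [Nat.choose_eq_zero_of_lt (by omega)]
    simp

lemma constantCoeff_u (ξ : ℝ) : PowerSeries.constantCoeff (u ξ) = 0 := by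
  simp [u]

lemma constantCoeff_S (ξ : ℝ) {M : ℕ} (h : 0 < M) (F : PowerSeries ℝ) :
    PowerSeries.constantCoeff (S ξ M F) = PowerSeries.coeff 0 F := by
  rw [S, map_sum, Finset.sum_eq_single 0]
  · simp
  · intro k _ hk
    obtain ⟨k, rfl⟩ := Nat.exists_eq_succ_of_ne_zero hk
    rw [map_mul, map_pow, constantCoeff_u]
    simp
  · intro h'; exact absurd (mem_range.mpr h) h'

end StmtAux

open StmtAux in
lemma jfrac_key (ξ : ℝ) (γ β : ℕ → ℝ) (M : ℕ) : ∀ d : ℕ, 2 * d + 1 ≤ M → ∀ i : ℕ,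
    (PowerSeries.X : PowerSeries ℝ) ^ (2 * d + 1) ∣
      (1 - PowerSeries.C ξ * PowerSeries.X) * jfrac (fun j => γ j + ξ) β d i
        - S ξ M (jfrac γ β d i) := by
  intro d
  induction d with
  | zero =>
    intro hM i
    show (PowerSeries.X : PowerSeries ℝ) ^ (2 * 0 + 1) ∣
      (1 - PowerSeries.C ξ * PowerSeries.X) * 1 - S ξ M 1
    rw [S_one ξ (by omega), mul_one]
    have : (1 - PowerSeries.C ξ * PowerSeries.X) - 1
        = PowerSeries.X * (- PowerSeries.C ξ) := by ring
    rw [this, pow_one]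
    exact dvd_mul_right _ _
  | succ d ih =>
    intro hM i
    have hM' : 2 * d + 3 ≤ M := by omega
    set Q : PowerSeries ℝ := 1 - PowerSeries.C ξ * PowerSeries.X with hQdef
    set J : PowerSeries ℝ := jfrac γ β d (i + 1) with hJdef
    set J' : PowerSeries ℝ := jfrac (fun j => γ j + ξ) β d (i + 1) with hJ'def
    set D : PowerSeries ℝ := 1 - PowerSeries.C (γ i) * PowerSeries.X
        - PowerSeries.C (β (i + 1)) * PowerSeries.X ^ 2 * J with hDdef
    set E : PowerSeries ℝ := 1 - PowerSeries.C (γ i + ξ) * PowerSeries.X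
        - PowerSeries.C (β (i + 1)) * PowerSeries.X ^ 2 * J' with hEdef
    have hgoal : jfrac γ β (d + 1) i = D⁻¹ := by rw [jfrac]
    have hgoal' : jfrac (fun j => γ j + ξ) β (d + 1) i = E⁻¹ := by rw [jfrac]
    rw [hgoal, hgoal']
    have hccD : PowerSeries.constantCoeff D = 1 := by
      rw [hDdef]; simp
    have hccE : PowerSeries.constantCoeff E = 1 := by
      rw [hEdef]; simp
    have hDinv : D * D⁻¹ = 1 :=
      PowerSeries.mul_inv_cancel D (by rw [hccD]; exact one_ne_zero)
    have hEinv : E⁻¹ * E = 1 :=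
      PowerSeries.inv_mul_cancel E (by rw [hccE]; exact one_ne_zero)
    have ihd := ih (by omega) (i + 1)
    -- Step A
    have hQiS : PowerSeries.X ^ (2 * d + 1) ∣ J' - Qi ξ * S ξ M J := by
      have h1 : J' - Qi ξ * S ξ M J = Qi ξ * (Q * J' - S ξ M J) := by
        rw [mul_sub, ← mul_assoc, Qi_mul_Q, one_mul]
      rw [h1]
      exact Dvd.dvd.mul_left ihd _
    -- Step B
    have hSD : PowerSeries.X ^ M ∣ S ξ M D
        - (1 - PowerSeries.C (γ i) * u ξ
            - PowerSeries.C (β (i + 1)) * (u ξ ^ 2 * S ξ M J)) := by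
      have e1 : S ξ M D = S ξ M 1 - PowerSeries.C (γ i) * S ξ M PowerSeries.X
          - PowerSeries.C (β (i + 1)) * S ξ M (PowerSeries.X ^ 2 * J) := by
        rw [hDdef, S_sub, S_sub, S_C_mul, mul_assoc, S_C_mul]
      rw [e1, S_one ξ (by omega)]
      have e2 : S ξ M PowerSeries.X = u ξ := by
        have := S_X_pow ξ (j := 1) (M := M) (by omega)
        simpa using this
      rw [e2]
      have h2 := S_mul ξ M (PowerSeries.X ^ 2) J
      rw [S_X_pow ξ (by omega : 2 < M)] at h2
      have e3 : 1 - PowerSeries.C (γ i) * u ξ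
            - PowerSeries.C (β (i + 1)) * S ξ M (PowerSeries.X ^ 2 * J)
          - (1 - PowerSeries.C (γ i) * u ξ
            - PowerSeries.C (β (i + 1)) * (u ξ ^ 2 * S ξ M J))
          = - (PowerSeries.C (β (i + 1))
              * (S ξ M (PowerSeries.X ^ 2 * J) - u ξ ^ 2 * S ξ M J)) := by
        ring
      rw [e3]
      exact dvd_neg.mpr (Dvd.dvd.mul_left h2 _)
    -- Step C
    have hQT : Q * (1 - PowerSeries.C (γ i) * u ξ
            - PowerSeries.C (β (i + 1)) * (u ξ ^ 2 * S ξ M J)) - E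
        = PowerSeries.C (β (i + 1)) * PowerSeries.X ^ 2 * (J' - Qi ξ * S ξ M J) := by
      rw [hEdef, hQdef]
      simp only [u, map_add]
      linear_combination (- PowerSeries.C (γ i) * PowerSeries.X
        - PowerSeries.C (β (i + 1)) * PowerSeries.X ^ 2 * Qi ξ * S ξ M J) * Q_mul_Qi ξ
    have hQSD : PowerSeries.X ^ (2 * d + 3) ∣ Q * S ξ M D - E := by
      have split : Q * S ξ M D - E
          = Q * (S ξ M D - (1 - PowerSeries.C (γ i) * u ξ
              - PowerSeries.C (β (i + 1)) * (u ξ ^ 2 * S ξ M J)))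
            + (Q * (1 - PowerSeries.C (γ i) * u ξ
              - PowerSeries.C (β (i + 1)) * (u ξ ^ 2 * S ξ M J)) - E) := by
        ring
      rw [split]
      apply dvd_add
      · exact dvd_trans (pow_dvd_pow _ hM') (Dvd.dvd.mul_left hSD _)
      · rw [hQT]
        have : (2 * d + 3) = 2 + (2 * d + 1) := by omega
        rw [this, pow_add]
        exact mul_dvd_mul (Dvd.dvd.mul_left dvd_rfl _) hQiS
    -- constant coefficient of S ξ M D
    have hccSD : PowerSeries.constantCoeff (S ξ M D) = 1 := by
      rw [constantCoeff_S ξ (by omega : 0 < M), PowerSeries.coeff_zero_eq_constantCoeff_apply,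
        hccD]
    have hSDinv : S ξ M D * (S ξ M D)⁻¹ = 1 :=
      PowerSeries.mul_inv_cancel _ (by rw [hccSD]; exact one_ne_zero)
    have hSDinv' : (S ξ M D)⁻¹ * S ξ M D = 1 :=
      PowerSeries.inv_mul_cancel _ (by rw [hccSD]; exact one_ne_zero)
    -- Step E
    have hSinv : PowerSeries.X ^ (2 * d + 3) ∣ S ξ M D⁻¹ - (S ξ M D)⁻¹ := by
      have h1 := S_mul ξ M D D⁻¹
      rw [hDinv, S_one ξ (by omega : 0 < M)] at h1
      have e4 : S ξ M D⁻¹ - (S ξ M D)⁻¹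
          = - ((S ξ M D)⁻¹ * (1 - S ξ M D * S ξ M D⁻¹)) := by
        linear_combination (- S ξ M D⁻¹) * hSDinv'
      rw [e4]
      exact dvd_neg.mpr (dvd_trans (pow_dvd_pow _ hM') (Dvd.dvd.mul_left h1 _))
    -- Final assembly
    have split2 : Q * E⁻¹ - S ξ M D⁻¹
        = E⁻¹ * (Q * S ξ M D - E) * (S ξ M D)⁻¹ - (S ξ M D⁻¹ - (S ξ M D)⁻¹) := by
      linear_combination (- (Q * E⁻¹)) * hSDinv + (S ξ M D)⁻¹ * hEinv
    have : 2 * (d + 1) + 1 = 2 * d + 3 := by omega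
    rw [this, split2]
    exact dvd_sub ((hQSD.mul_left _).mul_right _) hSinv

theorem stmt2 (ξ : ℝ) (a b γ β : ℕ → ℝ)
    (ha : ∀ N : ℕ, ∀ n < N, PowerSeries.coeff n (jfrac γ β N 0) = a n)
    (hb : ∀ n : ℕ, b n = ∑ k ∈ range (n + 1), (n.choose k : ℝ) * a k * ξ ^ (n - k)) :
    ∀ N : ℕ, ∀ n < N,
      PowerSeries.coeff n (jfrac (fun i => γ i + ξ) β N 0) = b n := by
  intro N n hn
  set M : ℕ := 2 * N + 3 with hMdef
  have key := jfrac_key ξ γ β M N (by omega) 0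
  set J : PowerSeries ℝ := jfrac γ β N 0 with hJdef
  set J' : PowerSeries ℝ := jfrac (fun j => γ j + ξ) β N 0 with hJ'def
  have h1 : PowerSeries.coeff n J' = PowerSeries.coeff n (StmtAux.Qi ξ * StmtAux.S ξ M J) := by
    have e1 : J' = StmtAux.Qi ξ * ((1 - PowerSeries.C ξ * PowerSeries.X) * J') := by
      rw [← mul_assoc, StmtAux.Qi_mul_Q, one_mul]
    calc PowerSeries.coeff n J'
        = PowerSeries.coeff n (StmtAux.Qi ξ * ((1 - PowerSeries.C ξ * PowerSeries.X) * J'))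
          := by rw [← e1]
      _ = PowerSeries.coeff n (StmtAux.Qi ξ * StmtAux.S ξ M J) := by
          have h2 : PowerSeries.X ^ (2 * N + 1) ∣
              StmtAux.Qi ξ * ((1 - PowerSeries.C ξ * PowerSeries.X) * J')
                - StmtAux.Qi ξ * StmtAux.S ξ M J := by
            rw [← mul_sub]
            exact Dvd.dvd.mul_left key _
          have h3 := PowerSeries.X_pow_dvd_iff.mp h2 n (by omega)
          rw [map_sub, sub_eq_zero] at h3
          exact h3
  rw [h1, StmtAux.coeff_Qi_mul_S ξ J (by omega : n < M), hb n]
  apply Finset.sum_congr rfl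
  intro k hk
  rw [mem_range] at hk
  rw [ha N k (by omega)]
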